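/- arXiv:1803.00792 — 2 statements merged into one kernel-verified Lean document; each statement's English description precedes it below -/
import Mathlib

section
/- For γ ∈ (1,2), the double integral ∬_{[0,1]²} (u^{γ−1} − v^{γ−1})² / |u−v|^{γ+1} du dv is finite. -/
open MeasureTheory Set

namespace Stmt1Aux

lemma add_rpow_le {x y p : ℝ} (hx : 0 ≤ x) (hy : 0 ≤ y) (hp : 0 ≤ p) (hp1 : p ≤ 1) :
    (x + y) ^ p ≤ x ^ p + y ^ p := by
  have h := NNReal.coe_le_coe.2 (NNReal.rpow_add_le_add_rpow x.toNNReal y.toNNReal hp hp1)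
  rwa [NNReal.coe_add, NNReal.coe_rpow, NNReal.coe_rpow, NNReal.coe_rpow, NNReal.coe_add,
    Real.coe_toNNReal x hx, Real.coe_toNNReal y hy] at h

lemma tangent_le {u v s : ℝ} (hv : 0 < v) (hvu : v ≤ u) (hs0 : 0 ≤ s) (hs1 : s ≤ 1) :
    u ^ s ≤ v ^ s + s * v ^ (s - 1) * (u - v) := by
  have hvne : v ≠ 0 := hv.ne'
  have hx : -1 ≤ (u - v) / v := by
    have : 0 ≤ (u - v) / v := div_nonneg (by linarith) hv.le
    linarith
  have key := rpow_one_add_le_one_add_mul_self hx hs0 hs1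
  have h1 : v * (1 + (u - v) / v) = u := by field_simp; ring
  calc u ^ s = (v * (1 + (u - v) / v)) ^ s := by rw [h1]
    _ = v ^ s * (1 + (u - v) / v) ^ s := Real.mul_rpow hv.le (by linarith [hx])
    _ ≤ v ^ s * (1 + s * ((u - v) / v)) :=
        mul_le_mul_of_nonneg_left key (Real.rpow_nonneg hv.le s)
    _ = v ^ s + s * v ^ (s - 1) * (u - v) := by
        rw [Real.rpow_sub_one hvne]
        field_simp

lemma core {γ θ u v : ℝ} (h1 : 1 < γ) (h2 : γ < 2) (hθ0 : 0 ≤ θ) (hθ1 : θ ≤ 1)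
    (hv : 0 < v) (hvu : v < u) :
    (u ^ (γ - 1) - v ^ (γ - 1)) ^ 2 / (u - v) ^ (γ + 1) ≤
      (γ - 1) ^ (2 - 2 * θ) * (v ^ ((γ - 2) * (2 - 2 * θ)) * (u - v) ^ (2 * θ * (γ - 2) + 1 - γ)) := by
  have hu : 0 < u := hv.trans hvu
  have hw : 0 < u - v := by linarith
  have hs0 : 0 < γ - 1 := by linarith
  have hs1 : γ - 1 ≤ 1 := by linarith
  set D := u ^ (γ - 1) - v ^ (γ - 1) with hD
  have hD0 : 0 < D := sub_pos.2 (Real.rpow_lt_rpow hv.le hvu hs0)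
  have hDA : D ≤ (u - v) ^ (γ - 1) := by
    have h := add_rpow_le (x := u - v) (y := v) hw.le hv.le hs0.le hs1
    rw [sub_add_cancel] at h
    have hvnn : (0:ℝ) ≤ v ^ (γ - 1) := Real.rpow_nonneg hv.le _
    simp only [hD]
    linarith
  have hDB : D ≤ (γ - 1) * v ^ (γ - 1 - 1) * (u - v) := by
    have h := tangent_le hv hvu.le hs0.le hs1
    simp only [hD]
    linarith
  have hBnn : 0 ≤ (γ - 1) * v ^ (γ - 1 - 1) * (u - v) := by
    apply mul_nonneg (mul_nonneg hs0.le (Real.rpow_nonneg hv.le _)) hw.le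
  have e1 : D ^ 2 = D ^ (2 * θ : ℝ) * D ^ (2 - 2 * θ : ℝ) := by
    rw [← Real.rpow_add hD0, show 2 * θ + (2 - 2 * θ) = (2:ℝ) by ring,
      show ((2:ℝ)) = ((2:ℕ):ℝ) by norm_num, Real.rpow_natCast]
  have key : D ^ 2 ≤ ((u - v) ^ (γ - 1)) ^ (2 * θ : ℝ) *
      ((γ - 1) * v ^ (γ - 1 - 1) * (u - v)) ^ (2 - 2 * θ : ℝ) := by
    rw [e1]
    exact mul_le_mul (Real.rpow_le_rpow hD0.le hDA (by linarith))
      (Real.rpow_le_rpow hD0.le hDB (by linarith))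
      (Real.rpow_nonneg hD0.le _) (Real.rpow_nonneg (Real.rpow_nonneg hw.le _) _)
  have expand : ((u - v) ^ (γ - 1)) ^ (2 * θ : ℝ) *
      ((γ - 1) * v ^ (γ - 1 - 1) * (u - v)) ^ (2 - 2 * θ : ℝ)
      = (γ - 1) ^ (2 - 2 * θ) * v ^ ((γ - 2) * (2 - 2 * θ)) *
        (u - v) ^ ((γ - 1) * (2 * θ) + (2 - 2 * θ)) := by
    rw [← Real.rpow_mul hw.le, Real.mul_rpow
        (mul_nonneg hs0.le (Real.rpow_nonneg hv.le _)) hw.le,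
      Real.mul_rpow hs0.le (Real.rpow_nonneg hv.le _), ← Real.rpow_mul hv.le,
      Real.rpow_add hw, show (γ - 1 - 1) * (2 - 2 * θ) = (γ - 2) * (2 - 2 * θ) by ring]
    ring
  have key2 : D ^ 2 ≤ (γ - 1) ^ (2 - 2 * θ) * v ^ ((γ - 2) * (2 - 2 * θ)) *
      (u - v) ^ ((γ - 1) * (2 * θ) + (2 - 2 * θ)) := expand ▸ key
  have hden : 0 < (u - v) ^ (γ + 1) := Real.rpow_pos_of_pos hw _
  calc D ^ 2 / (u - v) ^ (γ + 1)
      ≤ ((γ - 1) ^ (2 - 2 * θ) * v ^ ((γ - 2) * (2 - 2 * θ)) *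
        (u - v) ^ ((γ - 1) * (2 * θ) + (2 - 2 * θ))) / (u - v) ^ (γ + 1) := by
        exact div_le_div_of_nonneg_right key2 hden.le
    _ = (γ - 1) ^ (2 - 2 * θ) * (v ^ ((γ - 2) * (2 - 2 * θ)) *
        (u - v) ^ (2 * θ * (γ - 2) + 1 - γ)) := by
        rw [mul_assoc, mul_div_assoc, mul_div_assoc, ← Real.rpow_sub hw,
          show (γ - 1) * (2 * θ) + (2 - 2 * θ) - (γ + 1) = 2 * θ * (γ - 2) + 1 - γ by ring]

lemma intAbsL {b : ℝ} (hb : -1 < b) {c : ℝ} (hc : 0 ≤ c) :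
    IntegrableOn (fun t => |c - t| ^ b) (Icc 0 c) := by
  have h : IntervalIntegrable (fun t => (c - t) ^ b) volume 0 c := by
    simpa using (intervalIntegral.intervalIntegrable_rpow' (a := c - 0) (b := c - c) hb).comp_sub_left c
  have h2 : IntegrableOn (fun t => (c - t) ^ b) (Icc 0 c) volume := by
    rw [integrableOn_Icc_iff_integrableOn_Ioc]
    exact h.1
  exact h2.congr_fun (fun t ht => by rw [abs_of_nonneg (by linarith [ht.2] : (0:ℝ) ≤ c - t)])
    measurableSet_Icc

lemma intAbsR {b : ℝ} (hb : -1 < b) {c : ℝ} (hc : c ≤ 1) :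
    IntegrableOn (fun t => |c - t| ^ b) (Icc c 1) := by
  have h : IntervalIntegrable (fun t => (t - c) ^ b) volume c 1 := by
    simpa using (intervalIntegral.intervalIntegrable_rpow' (a := (0:ℝ)) (b := 1 - c) hb).comp_sub_right c
  have h2 : IntegrableOn (fun t => (t - c) ^ b) (Icc c 1) volume := by
    rw [integrableOn_Icc_iff_integrableOn_Ioc]
    exact h.1
  exact h2.congr_fun (fun t ht => by
    rw [abs_sub_comm, abs_of_nonneg (by linarith [ht.1] : (0:ℝ) ≤ t - c)]) measurableSet_Icc

lemma intAbs {b : ℝ} (hb : -1 < b) {c : ℝ} (hc : c ∈ Icc (0:ℝ) 1) :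
    IntegrableOn (fun t => |c - t| ^ b) (Icc (0:ℝ) 1) := by
  rw [← Icc_union_Icc_eq_Icc hc.1 hc.2]
  exact (intAbsL hb hc.1).union (intAbsR hb hc.2)

lemma intAbs_bound {b : ℝ} (hb : -1 < b) {c : ℝ} (hc : c ∈ Icc (0:ℝ) 1) :
    ∫ t in Icc (0:ℝ) 1, |c - t| ^ b ≤ 2 / (b + 1) := by
  have hb1 : 0 < b + 1 := by linarith
  have hsplit : Icc (0:ℝ) 1 = Icc 0 c ∪ Ioc c 1 := (Icc_union_Ioc_eq_Icc hc.1 hc.2).symm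
  have hdisj : Disjoint (Icc (0:ℝ) c) (Ioc c 1) := by
    apply Set.disjoint_left.2
    intro x hx hx'
    exact absurd hx.2 (not_le.2 hx'.1)
  rw [hsplit, setIntegral_union hdisj measurableSet_Ioc (intAbsL hb hc.1)
    ((intAbsR hb hc.2).mono_set Ioc_subset_Icc_self)]
  have e1 : ∫ t in Icc (0:ℝ) c, |c - t| ^ b = c ^ (b + 1) / (b + 1) := by
    rw [MeasureTheory.integral_Icc_eq_integral_Ioc, ← intervalIntegral.integral_of_le hc.1,
      intervalIntegral.integral_congr (g := fun t => (c - t) ^ b)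
        (fun t ht => by
          rw [Set.uIcc_of_le hc.1] at ht
          rw [abs_of_nonneg (by linarith [ht.2] : (0:ℝ) ≤ c - t)]),
      intervalIntegral.integral_comp_sub_left (fun t => t ^ b) c, sub_self, sub_zero,
      integral_rpow (Or.inl hb), Real.zero_rpow (by linarith : b + 1 ≠ 0),
      sub_zero]
  have e2 : ∫ t in Ioc c 1, |c - t| ^ b = (1 - c) ^ (b + 1) / (b + 1) := by
    rw [← intervalIntegral.integral_of_le hc.2,
      intervalIntegral.integral_congr (g := fun t => (t - c) ^ b)
        (fun t ht => by
          rw [Set.uIcc_of_le hc.2] at ht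
          rw [abs_sub_comm, abs_of_nonneg (by linarith [ht.1] : (0:ℝ) ≤ t - c)]),
      intervalIntegral.integral_comp_sub_right (fun t => t ^ b) c, sub_self,
      integral_rpow (Or.inl hb), Real.zero_rpow (by linarith : b + 1 ≠ 0),
      sub_zero]
  rw [e1, e2]
  have hc1 : c ^ (b + 1) ≤ 1 := Real.rpow_le_one hc.1 hc.2 hb1.le
  have hc2 : (1 - c) ^ (b + 1) ≤ 1 := Real.rpow_le_one (by linarith [hc.2]) (by linarith [hc.1]) hb1.le
  rw [← add_div, div_le_div_iff₀ hb1 hb1]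
  nlinarith

lemma G_integrable {a b : ℝ} (ha : -1 < a) (hb : -1 < b) :
    Integrable (fun p : ℝ × ℝ => p.1 ^ a * |p.1 - p.2| ^ b)
      ((volume.restrict (Icc (0:ℝ) 1)).prod (volume.restrict (Icc (0:ℝ) 1))) := by
  have hmeas : AEStronglyMeasurable (fun p : ℝ × ℝ => p.1 ^ a * |p.1 - p.2| ^ b)
      ((volume.restrict (Icc (0:ℝ) 1)).prod (volume.restrict (Icc (0:ℝ) 1))) := by
    apply Measurable.aestronglyMeasurable
    measurability
  rw [MeasureTheory.integrable_prod_iff hmeas]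
  constructor
  · filter_upwards [self_mem_ae_restrict (measurableSet_Icc : MeasurableSet (Icc (0:ℝ) 1))]
      with u hu
    exact (intAbs hb hu).const_mul _
  · apply Integrable.mono' (g := fun u : ℝ => u ^ a * (2 / (b + 1)))
    · have h : IntegrableOn (fun x : ℝ => x ^ a) (Icc (0:ℝ) 1) volume := by
        rw [integrableOn_Icc_iff_integrableOn_Ioc]
        exact (intervalIntegral.intervalIntegrable_rpow' ha).1
      exact h.mul_const _
    · exact hmeas.norm.integral_prod_right'
    · filter_upwards [self_mem_ae_restrict (measurableSet_Icc : MeasurableSet (Icc (0:ℝ) 1))]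
        with u hu
      have hnn : 0 ≤ ∫ v, ‖u ^ a * |u - v| ^ b‖ ∂(volume.restrict (Icc (0:ℝ) 1)) :=
        integral_nonneg fun v => norm_nonneg _
      rw [Real.norm_eq_abs, abs_of_nonneg hnn]
      have heq : (fun v => ‖u ^ a * |u - v| ^ b‖) = fun v => u ^ a * |u - v| ^ b := by
        funext v
        rw [Real.norm_eq_abs, abs_of_nonneg
          (mul_nonneg (Real.rpow_nonneg hu.1 _) (Real.rpow_nonneg (abs_nonneg _) _))]
      rw [heq, MeasureTheory.integral_const_mul]
      exact mul_le_mul_of_nonneg_left (intAbs_bound hb hu) (Real.rpow_nonneg hu.1 _)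

lemma meas_f (γ : ℝ) :
    Measurable (fun p : ℝ × ℝ => (p.1 ^ (γ - 1) - p.2 ^ (γ - 1)) ^ 2 / |p.1 - p.2| ^ (γ + 1)) := by
  measurability

end Stmt1Aux

/-- For γ ∈ (1,2), ∬_{[0,1]²} (u^{γ−1} − v^{γ−1})² / |u−v|^{γ+1} du dv is finite. -/
theorem stmt1 (γ : ℝ) (h1 : 1 < γ) (h2 : γ < 2) :
    IntegrableOn (fun p : ℝ × ℝ => (p.1 ^ (γ - 1) - p.2 ^ (γ - 1)) ^ 2 / |p.1 - p.2| ^ (γ + 1))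
      (Icc (0:ℝ) 1 ×ˢ Icc (0:ℝ) 1) := by
  have h2γ : (0:ℝ) < 2 - γ := by linarith
  have hmax : max (1 - 1 / (2 * (2 - γ))) 0 < 1 / 2 := by
    apply max_lt _ (by norm_num)
    have hpos : (0:ℝ) < 2 * (2 - γ) := by linarith
    have h := one_div_lt_one_div_of_lt hpos (by linarith : 2 * (2 - γ) < 2)
    linarith
  obtain ⟨θ, hθL, hθh⟩ := exists_between hmax
  have hθ0 : 0 < θ := lt_of_le_of_lt (le_max_right _ _) hθL
  have hθl : 1 - 1 / (2 * (2 - γ)) < θ := lt_of_le_of_lt (le_max_left _ _) hθL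
  have ha : -1 < (γ - 2) * (2 - 2 * θ) := by
    have hpos : (0:ℝ) < 2 * (2 - γ) := by linarith
    have h := (lt_div_iff₀ hpos).mp (by linarith : 1 - θ < 1 / (2 * (2 - γ)))
    nlinarith
  have hb : -1 < 2 * θ * (γ - 2) + 1 - γ := by
    nlinarith [mul_pos h2γ (by linarith : (0:ℝ) < 1 - 2 * θ)]
  have hK0 : 0 ≤ (γ - 1) ^ (2 - 2 * θ) := Real.rpow_nonneg (by linarith) _
  have hg : IntegrableOn (fun p : ℝ × ℝ =>
      (γ - 1) ^ (2 - 2 * θ) * (p.1 ^ ((γ - 2) * (2 - 2 * θ)) *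
        |p.1 - p.2| ^ (2 * θ * (γ - 2) + 1 - γ)) +
      (γ - 1) ^ (2 - 2 * θ) * (p.2 ^ ((γ - 2) * (2 - 2 * θ)) *
        |p.1 - p.2| ^ (2 * θ * (γ - 2) + 1 - γ)))
      (Icc (0:ℝ) 1 ×ˢ Icc (0:ℝ) 1) volume := by
    have hG1 := Stmt1Aux.G_integrable ha hb
    have hG2 : Integrable (fun p : ℝ × ℝ => p.2 ^ ((γ - 2) * (2 - 2 * θ)) *
        |p.1 - p.2| ^ (2 * θ * (γ - 2) + 1 - γ))
        ((volume.restrict (Icc (0:ℝ) 1)).prod (volume.restrict (Icc (0:ℝ) 1))) := by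
      have hsw := hG1.swap
      apply hsw.congr
      refine Filter.Eventually.of_forall fun p => ?_
      simp only [Function.comp_apply, Prod.fst_swap, Prod.snd_swap, Prod.swap]
      rw [abs_sub_comm]
    unfold IntegrableOn
    rw [Measure.volume_eq_prod, ← Measure.prod_restrict]
    exact (hG1.const_mul _).add (hG2.const_mul _)
  have hnull1 : (volume : Measure (ℝ × ℝ)) {p : ℝ × ℝ | p.1 = 0} = 0 := by
    have he : {p : ℝ × ℝ | p.1 = 0} = ({0} : Set ℝ) ×ˢ (univ : Set ℝ) := by
      ext p
      simp only [Set.mem_prod, Set.mem_singleton_iff, Set.mem_univ, and_true, true_and,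
        Set.mem_setOf_eq]
    rw [he, Measure.volume_eq_prod, Measure.prod_prod]
    simp
  have hnull2 : (volume : Measure (ℝ × ℝ)) {p : ℝ × ℝ | p.2 = 0} = 0 := by
    have he : {p : ℝ × ℝ | p.2 = 0} = (univ : Set ℝ) ×ˢ ({0} : Set ℝ) := by
      ext p
      simp only [Set.mem_prod, Set.mem_singleton_iff, Set.mem_univ, and_true, true_and,
        Set.mem_setOf_eq]
    rw [he, Measure.volume_eq_prod, Measure.prod_prod]
    simp
  have hnull3 : (volume : Measure (ℝ × ℝ)) {p : ℝ × ℝ | p.1 = p.2} = 0 := by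
    rw [Measure.volume_eq_prod,
      MeasureTheory.Measure.measure_prod_null (measurableSet_eq_fun measurable_fst measurable_snd)]
    refine Filter.Eventually.of_forall fun x => ?_
    have he : Prod.mk x ⁻¹' {p : ℝ × ℝ | p.1 = p.2} = {x} := by ext y; simp [eq_comm]
    simp [he]
  have hae : ∀ᵐ p : ℝ × ℝ, p.1 ≠ 0 ∧ p.2 ≠ 0 ∧ p.1 ≠ p.2 := by
    filter_upwards [measure_eq_zero_iff_ae_notMem.mp hnull1, measure_eq_zero_iff_ae_notMem.mp hnull2,
      measure_eq_zero_iff_ae_notMem.mp hnull3] with p hp1 hp2 hp3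
    exact ⟨hp1, hp2, hp3⟩
  have hsm : AEStronglyMeasurable
      (fun p : ℝ × ℝ => (p.1 ^ (γ - 1) - p.2 ^ (γ - 1)) ^ 2 / |p.1 - p.2| ^ (γ + 1))
      (volume.restrict (Icc (0:ℝ) 1 ×ˢ Icc (0:ℝ) 1)) :=
    (Stmt1Aux.meas_f γ).aestronglyMeasurable
  refine Integrable.mono' hg hsm ?_
  filter_upwards [ae_restrict_of_ae hae,
    self_mem_ae_restrict (measurableSet_Icc.prod measurableSet_Icc)] with p hp hpsq
  obtain ⟨hp1, hp2, hp12⟩ := hp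
  obtain ⟨hu, hv⟩ := hpsq
  have hu0 : 0 < p.1 := lt_of_le_of_ne hu.1 (Ne.symm hp1)
  have hv0 : 0 < p.2 := lt_of_le_of_ne hv.1 (Ne.symm hp2)
  rw [Real.norm_eq_abs,
    abs_of_nonneg (div_nonneg (sq_nonneg _) (Real.rpow_nonneg (abs_nonneg _) _))]
  have hT1 : 0 ≤ (γ - 1) ^ (2 - 2 * θ) * (p.1 ^ ((γ - 2) * (2 - 2 * θ)) *
      |p.1 - p.2| ^ (2 * θ * (γ - 2) + 1 - γ)) :=
    mul_nonneg hK0 (mul_nonneg (Real.rpow_nonneg hu.1 _) (Real.rpow_nonneg (abs_nonneg _) _))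
  have hT2 : 0 ≤ (γ - 1) ^ (2 - 2 * θ) * (p.2 ^ ((γ - 2) * (2 - 2 * θ)) *
      |p.1 - p.2| ^ (2 * θ * (γ - 2) + 1 - γ)) :=
    mul_nonneg hK0 (mul_nonneg (Real.rpow_nonneg hv.1 _) (Real.rpow_nonneg (abs_nonneg _) _))
  rcases lt_or_gt_of_ne hp12 with hlt | hgt
  · have habs : |p.1 - p.2| = p.2 - p.1 := by
      rw [abs_sub_comm]; exact abs_of_pos (by linarith)
    have hcore := Stmt1Aux.core h1 h2 hθ0.le (by linarith : θ ≤ 1) hu0 hlt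
    have hflip : (p.1 ^ (γ - 1) - p.2 ^ (γ - 1)) ^ 2 = (p.2 ^ (γ - 1) - p.1 ^ (γ - 1)) ^ 2 := by
      ring
    rw [habs] at hT1 hT2 ⊢
    rw [hflip]
    linarith
  · have habs : |p.1 - p.2| = p.1 - p.2 := abs_of_pos (by linarith)
    have hcore := Stmt1Aux.core h1 h2 hθ0.le (by linarith : θ ≤ 1) hv0 hgt
    rw [habs] at hT1 hT2 ⊢
    linarith
end

section
/- Suppose ρ : [0,T] × (0,1) → [0,1] is such that, for almost every t, ρ_t is (γ−1)/2-Hölder continuous, and ∫₀ᵀ∫₀¹ (ρ_t(u) − α)²/u^γ du dt < ∞ for some γ ∈ (1,2). Then ρ_t extends continuously to u = 0 with ρ_t(0) = α for almost every t ∈ [0,T]. -/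
open MeasureTheory Set

/-- Dist form of HolderOnWith. -/
lemma holderOnWith_dist_le {C r : NNReal} {f : ℝ → ℝ} {s : Set ℝ}
    (h : HolderOnWith C r f s) {x y : ℝ} (hx : x ∈ s) (hy : y ∈ s) :
    dist (f x) (f y) ≤ C * dist x y ^ (r : ℝ) := by
  have h1 : edist (f x) (f y) ≤ ENNReal.ofReal ((C : ℝ) * dist x y ^ (r : ℝ)) := by
    refine (h.edist_le hx hy).trans_eq ?_
    rw [edist_dist, ENNReal.ofReal_mul C.coe_nonneg,
      ENNReal.ofReal_rpow_of_nonneg dist_nonneg r.coe_nonneg, ENNReal.ofReal_coe_nnreal]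
  rw [edist_dist] at h1
  exact (ENNReal.ofReal_le_ofReal_iff (by positivity)).mp h1

/-- If for a.e. t the profile ρ_t is (γ−1)/2-Hölder on (0,1) and
∫₀ᵀ∫₀¹ (ρ_t(u)−α)²/u^γ du dt < ∞, then ρ_t(0⁺) = α for a.e. t ∈ [0,T]. -/
theorem stmt12 (γ T α : ℝ) (h1 : 1 < γ) (h2 : γ < 2) (hT : 0 < T)
    (hα : α ∈ Set.Ioo (0:ℝ) 1)
    (ρ : ℝ → ℝ → ℝ) (hval : ∀ t u, ρ t u ∈ Set.Icc (0:ℝ) 1)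
    (hhold : ∀ᵐ t ∂(volume.restrict (Icc 0 T)),
      ∃ C : NNReal, HolderOnWith C (Real.toNNReal ((γ - 1) / 2)) (ρ t) (Ioo 0 1))
    (hint : IntegrableOn (fun p : ℝ × ℝ => (ρ p.1 p.2 - α) ^ 2 / p.2 ^ γ)
      (Icc (0:ℝ) T ×ˢ Ioo (0:ℝ) 1)) :
    ∀ᵐ t ∂(volume.restrict (Icc (0:ℝ) T)),
      Filter.Tendsto (ρ t) (nhdsWithin 0 (Ioo (0:ℝ) 1)) (nhds α) := by
  set β : ℝ := (γ - 1) / 2 with hβdef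
  have hβpos : 0 < β := by simp only [hβdef]; linarith
  -- Step A: a.e. t, the slice is integrable
  have hprod : ∀ᵐ t ∂(volume.restrict (Icc (0:ℝ) T)),
      IntegrableOn (fun u => (ρ t u - α) ^ 2 / u ^ γ) (Ioo (0:ℝ) 1) := by
    have h := hint
    rw [IntegrableOn, Measure.volume_eq_prod, ← Measure.prod_restrict] at h
    exact h.prod_right_ae
  filter_upwards [hprod, hhold] with t hg hC
  obtain ⟨C, hC⟩ := hC
  set g : ℝ → ℝ := fun u => (ρ t u - α) ^ 2 / u ^ γ with hgdef
  set I : ℝ := ∫ v in Ioo (0:ℝ) 1, g v with hIdef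
  rw [Metric.tendsto_nhdsWithin_nhds]
  intro ε εpos
  by_contra hcon
  push_neg at hcon
  -- eventual smallness conditions near 0⁺
  have hev : ∀ᶠ u in nhdsWithin (0:ℝ) (Ioi 0),
      u < 1/2 ∧ (C : ℝ) * u ^ β < ε / 2 ∧ I < (ε/2)^2 / 2 ^ γ * u ^ (1 - γ) := by
    have e1 : ∀ᶠ u in nhdsWithin (0:ℝ) (Ioi 0), u < 1/2 :=
      eventually_nhdsWithin_of_eventually_nhds
        (Filter.Tendsto.eventually_lt_const (by norm_num) Filter.tendsto_id)
    have e2 : Filter.Tendsto (fun u : ℝ => (C : ℝ) * u ^ β) (nhdsWithin 0 (Ioi 0)) (nhds 0) := by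
      have hβt : Filter.Tendsto (fun u : ℝ => u ^ β) (nhdsWithin 0 (Ioi 0)) (nhds 0) := by
        have hcont : Filter.Tendsto (fun u : ℝ => u ^ β) (nhdsWithin 0 (Ioi 0))
            (nhds ((0:ℝ) ^ β)) :=
          (Real.continuousAt_rpow_const 0 β (Or.inr hβpos.le)).continuousWithinAt
        rwa [Real.zero_rpow hβpos.ne'] at hcont
      simpa using hβt.const_mul (C : ℝ)
    have e2' : ∀ᶠ u in nhdsWithin (0:ℝ) (Ioi 0), (C : ℝ) * u ^ β < ε / 2 :=
      e2.eventually_lt_const (by positivity)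
    have e3 : Filter.Tendsto (fun u : ℝ => (ε/2)^2 / 2 ^ γ * u ^ (1 - γ))
        (nhdsWithin 0 (Ioi 0)) Filter.atTop := by
      have hpow : Filter.Tendsto (fun u : ℝ => u ^ (1 - γ)) (nhdsWithin 0 (Ioi 0))
          Filter.atTop := by
        have hin : Filter.Tendsto (fun u : ℝ => u ^ (γ - 1)) (nhdsWithin 0 (Ioi 0))
            (nhdsWithin 0 (Ioi 0)) := by
          rw [tendsto_nhdsWithin_iff]
          constructor
          · have hcont : Filter.Tendsto (fun u : ℝ => u ^ (γ - 1)) (nhdsWithin 0 (Ioi 0))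
                (nhds ((0:ℝ) ^ (γ - 1))) :=
              (Real.continuousAt_rpow_const 0 (γ-1)
                (Or.inr (by linarith))).continuousWithinAt
            rwa [Real.zero_rpow (by intro hz; nlinarith : γ - 1 ≠ 0)] at hcont
          · filter_upwards [self_mem_nhdsWithin] with u hu
            exact Real.rpow_pos_of_pos hu _
        have hinv : Filter.Tendsto (fun u : ℝ => (u ^ (γ - 1))⁻¹) (nhdsWithin 0 (Ioi 0))
            Filter.atTop := tendsto_inv_nhdsGT_zero.comp hin
        refine Filter.Tendsto.congr' ?_ hinv
        filter_upwards [self_mem_nhdsWithin] with u hu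
        rw [← Real.rpow_neg (le_of_lt hu), neg_sub]
      exact hpow.const_mul_atTop (by positivity)
    filter_upwards [e1, e2', e3.eventually_gt_atTop I] with u hu1 hu2 hu3
    exact ⟨hu1, hu2, hu3⟩
  obtain ⟨δ, hδpos, hδ⟩ := (nhdsGT_basis (0:ℝ)).eventually_iff.mp hev
  obtain ⟨u, huIoo, hud, hue⟩ := hcon δ hδpos
  have hu0 : 0 < u := huIoo.1
  have huδ : u ∈ Ioo 0 δ := ⟨hu0, by simpa [abs_of_pos hu0] using hud⟩
  obtain ⟨hu12, huC, huI⟩ := hδ huδ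
  -- on (u, 2u), |ρ t v - α| ≥ ε/2
  have hsub : Ioo u (2*u) ⊆ Ioo (0:ℝ) 1 := fun v hv =>
    ⟨lt_trans hu0 hv.1, lt_trans hv.2 (by linarith)⟩
  have hlow : ∀ v ∈ Ioo u (2*u), (ε/2)^2 / (2*u) ^ γ ≤ g v := by
    intro v hv
    have hv0 : 0 < v := lt_trans hu0 hv.1
    have hdist : dist (ρ t v) (ρ t u) ≤ ε / 2 := by
      have hd := holderOnWith_dist_le hC (hsub hv) huIoo
      refine hd.trans ?_
      have hdd : dist v u ≤ u := by
        rw [Real.dist_eq, abs_of_pos (by linarith [hv.1] : (0:ℝ) < v - u)]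
        linarith [hv.2]
      have hcoe : ((Real.toNNReal ((γ - 1) / 2) : NNReal) : ℝ) = β := by
        rw [Real.coe_toNNReal _ (le_of_lt hβpos)]
      rw [hcoe]
      calc (C:ℝ) * dist v u ^ β ≤ (C:ℝ) * u ^ β := by
            gcongr
          _ ≤ ε / 2 := le_of_lt huC
    have habs : ε / 2 ≤ |ρ t v - α| := by
      have hb1 : ε ≤ |ρ t u - α| := by simpa [Real.dist_eq] using hue
      have hb2 : |ρ t v - ρ t u| ≤ ε / 2 := by simpa [Real.dist_eq] using hdist
      have hb3 : |ρ t u - α| ≤ |ρ t u - ρ t v| + |ρ t v - α| := abs_sub_le _ _ _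
      have hb2' : |ρ t u - ρ t v| ≤ ε / 2 := by rwa [abs_sub_comm]
      linarith
    have hsq : (ε/2)^2 ≤ (ρ t v - α)^2 := by
      have habs' : |ε/2| ≤ |ρ t v - α| := by
        rwa [abs_of_pos (by positivity)]
      calc (ε/2)^2 = |ε/2|^2 := (sq_abs _).symm
        _ ≤ |ρ t v - α|^2 := pow_le_pow_left₀ (abs_nonneg _) habs' 2
        _ = (ρ t v - α)^2 := sq_abs _
    have hvpow : v ^ γ ≤ (2*u) ^ γ :=
      Real.rpow_le_rpow (le_of_lt hv0) (le_of_lt hv.2) (by linarith)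
    exact div_le_div₀ (by positivity) hsq (Real.rpow_pos_of_pos hv0 _) hvpow
  -- integral comparison
  have hgin : IntegrableOn g (Ioo u (2*u)) := hg.mono_set hsub
  have hvol : (volume (Ioo u (2*u))).toReal = u := by
    rw [Real.volume_Ioo, ENNReal.toReal_ofReal (by linarith)]
    ring
  have hlower : (ε/2)^2 / (2*u) ^ γ * u ≤ ∫ v in Ioo u (2*u), g v := by
    have hlb := setIntegral_ge_of_const_le measurableSet_Ioo
      (by rw [Real.volume_Ioo]; exact ENNReal.ofReal_ne_top) hlow hgin
    rwa [measureReal_def, hvol, smul_eq_mul, mul_comm] at hlb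
  have hupper : (∫ v in Ioo u (2*u), g v) ≤ I := by
    refine setIntegral_mono_set hg ?_ (HasSubset.Subset.eventuallyLE hsub)
    filter_upwards [ae_restrict_mem measurableSet_Ioo] with v hv
    have hvγ : 0 < v ^ γ := Real.rpow_pos_of_pos hv.1 _
    positivity
  have hkey : (ε/2)^2 / 2 ^ γ * u ^ (1 - γ) = (ε/2)^2 / (2*u) ^ γ * u := by
    rw [Real.mul_rpow (by norm_num) hu0.le, Real.rpow_sub hu0, Real.rpow_one]
    have h2γ : (0:ℝ) < 2 ^ γ := Real.rpow_pos_of_pos (by norm_num) _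
    have huγ : (0:ℝ) < u ^ γ := Real.rpow_pos_of_pos hu0 _
    field_simp
  rw [hkey] at huI
  linarith
end
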